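/- arXiv:1705.02266 — 6 statements merged into one kernel-verified Lean document; each statement's English description precedes it below -/
import Mathlib

section
/- In the clause-variable game where clause player c has three pure strategies i, k, l and receives payoff p_i - p_k - p_l from strategy i, -p_i + p_k - p_l from strategy k, and -p_i - p_k + p_l from strategy l (where p_i, p_k, p_l ∈ [0,1] are the probabilities that the three variable players play True), the maximum payoff c can obtain is 1, and this maximum is achieved only if exactly one of p_i, p_k, p_l equals 1 and the other two equal 0. -/
/-- The clause player's payoff from any mixed strategy (qi, qk, ql) is at most 1,
and equals 1 only if exactly one of the variable probabilities is 1 and the other two are 0. -/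
theorem stmt_0 (pi pk pl : ℝ) (hpi : pi ∈ Set.Icc (0:ℝ) 1) (hpk : pk ∈ Set.Icc (0:ℝ) 1)
    (hpl : pl ∈ Set.Icc (0:ℝ) 1) (qi qk ql : ℝ) (hqi : 0 ≤ qi) (hqk : 0 ≤ qk) (hql : 0 ≤ ql)
    (hq : qi + qk + ql = 1) :
    qi * (pi - pk - pl) + qk * (-pi + pk - pl) + ql * (-pi - pk + pl) ≤ 1 ∧
    (qi * (pi - pk - pl) + qk * (-pi + pk - pl) + ql * (-pi - pk + pl) = 1 →
      (pi = 1 ∧ pk = 0 ∧ pl = 0) ∨ (pk = 1 ∧ pi = 0 ∧ pl = 0) ∨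
        (pl = 1 ∧ pi = 0 ∧ pk = 0)) := by
  obtain ⟨hpi0, hpi1⟩ := hpi
  obtain ⟨hpk0, hpk1⟩ := hpk
  obtain ⟨hpl0, hpl1⟩ := hpl
  have hAi : pi - pk - pl ≤ 1 := by linarith
  have hAk : -pi + pk - pl ≤ 1 := by linarith
  have hAl : -pi - pk + pl ≤ 1 := by linarith
  constructor
  · nlinarith [mul_le_mul_of_nonneg_left hAi hqi, mul_le_mul_of_nonneg_left hAk hqk,
      mul_le_mul_of_nonneg_left hAl hql]
  · intro heq
    have h1 : qi * (1 - (pi - pk - pl)) + qk * (1 - (-pi + pk - pl))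
        + ql * (1 - (-pi - pk + pl)) = 0 := by nlinarith
    have t1 : 0 ≤ qi * (1 - (pi - pk - pl)) := mul_nonneg hqi (by linarith)
    have t2 : 0 ≤ qk * (1 - (-pi + pk - pl)) := mul_nonneg hqk (by linarith)
    have t3 : 0 ≤ ql * (1 - (-pi - pk + pl)) := mul_nonneg hql (by linarith)
    rcases lt_or_eq_of_le hqi with h | h
    · left
      have : pi - pk - pl = 1 := by
        have := mul_eq_zero.mp (by linarith : qi * (1 - (pi - pk - pl)) = 0)
        rcases this with h' | h'
        · linarith
        · linarith
      exact ⟨by linarith, by linarith, by linarith⟩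
    · rcases lt_or_eq_of_le hqk with h2 | h2
      · right; left
        have : -pi + pk - pl = 1 := by
          have := mul_eq_zero.mp (by linarith : qk * (1 - (-pi + pk - pl)) = 0)
          rcases this with h' | h'
          · linarith
          · linarith
        exact ⟨by linarith, by linarith, by linarith⟩
      · right; right
        have hql' : ql = 1 := by linarith
        have : -pi - pk + pl = 1 := by nlinarith
        exact ⟨by linarith, by linarith, by linarith⟩
end

section
/- In a polymatrix game built from a monotone cubic 1-in-3 SAT formula φ, if φ admits a 1-in-3 satisfying assignment, then the pure strategy profile in which each variable player plays the truth value of its variable and each clause player plays the strategy corresponding to the unique true variable of its clause is an exact Nash equilibrium with social welfare equal to the number of clauses m. -/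
namespace Stmt2

/-- A monotone cubic formula with exactly three distinct variables per clause. -/
structure CubicFormula (V C : Type) where
  var : C → Fin 3 → V
  inj : ∀ c, Function.Injective (var c)

variable {V C : Type} [Fintype V] [Fintype C] [DecidableEq V]

/-- α is a 1-in-3 satisfying assignment: exactly one variable per clause is true. -/
def OneInThree (F : CubicFormula V C) (α : V → Bool) : Prop :=
  ∀ c : C, (Finset.univ.filter (fun j : Fin 3 => α (F.var c j) = true)).card = 1

/-- Payoff of clause player `c` for pure strategy `j`, where `p v` is the probability
that variable player `v` plays True: `p_j - Σ_{j'≠j} p_{j'}`. -/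
def clausePure (F : CubicFormula V C) (p : V → ℝ) (c : C) (j : Fin 3) : ℝ :=
  p (F.var c j) - ∑ j' ∈ Finset.univ.erase j, p (F.var c j')

/-- Expected payoff of clause player `c`, where `q c` is its mixed strategy. -/
def clauseExp (F : CubicFormula V C) (p : V → ℝ) (q : C → Fin 3 → ℝ) (c : C) : ℝ :=
  ∑ j, q c j * clausePure F p c j

/-- Payoff of variable player `v` for pure strategy `b` (True/False): 0 for True, and
`-Σ` (probability an incident clause plays `v`'s column) for False. -/
def varPure (F : CubicFormula V C) (q : C → Fin 3 → ℝ) (v : V) (b : Bool) : ℝ :=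
  if b then 0 else -∑ c, ∑ j, (if F.var c j = v then q c j else 0)

/-- Expected payoff of variable player `v`, who plays True with probability `p v`. -/
def varExp (F : CubicFormula V C) (p : V → ℝ) (q : C → Fin 3 → ℝ) (v : V) : ℝ :=
  p v * varPure F q v true + (1 - p v) * varPure F q v false

/-- Social welfare: sum of all players' expected payoffs. -/
def welfare (F : CubicFormula V C) (p : V → ℝ) (q : C → Fin 3 → ℝ) : ℝ :=
  ∑ c, clauseExp F p q c + ∑ v, varExp F p q v

/-- A valid mixed strategy profile. -/
def IsProfile (p : V → ℝ) (q : C → Fin 3 → ℝ) : Prop :=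
  (∀ v, p v ∈ Set.Icc (0:ℝ) 1) ∧ (∀ c j, 0 ≤ q c j) ∧ (∀ c, ∑ j, q c j = 1)

/-- An exact Nash equilibrium: no player can improve by a unilateral (pure) deviation. -/
def IsNE (F : CubicFormula V C) (p : V → ℝ) (q : C → Fin 3 → ℝ) : Prop :=
  IsProfile p q ∧ (∀ c j, clauseExp F p q c ≥ clausePure F p c j) ∧
    (∀ v b, varExp F p q v ≥ varPure F q v b)

/-- If φ admits a 1-in-3 satisfying assignment α, then the corresponding pure profile
is an exact Nash equilibrium with social welfare equal to the number of clauses. -/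
theorem stmt_2 (F : CubicFormula V C) (α : V → Bool) (hα : OneInThree F α)
    (p : V → ℝ) (q : C → Fin 3 → ℝ)
    (hp : ∀ v, p v = if α v then 1 else 0)
    (hq : ∀ c j, q c j = if α (F.var c j) then 1 else 0) :
    IsNE F p q ∧ welfare F p q = Fintype.card C := by
  -- basic bounds
  have hp01 : ∀ v, p v ∈ Set.Icc (0:ℝ) 1 := by
    intro v; rw [hp]; constructor <;> (split <;> norm_num)
  have hq0 : ∀ c j, 0 ≤ q c j := by
    intro c j; rw [hq]; split <;> norm_num
  -- sums equal 1
  have hpsum : ∀ c, ∑ j, p (F.var c j) = 1 := by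
    intro c
    simp only [hp]
    rw [Finset.sum_boole]
    norm_cast
    exact hα c
  have hqsum : ∀ c, ∑ j, q c j = 1 := by
    intro c
    have : ∑ j, q c j = ∑ j, p (F.var c j) :=
      Finset.sum_congr rfl fun j _ => by rw [hq, hp]
    rw [this, hpsum]
  -- clause pure payoff
  have hcp : ∀ c j, clausePure F p c j = 2 * p (F.var c j) - 1 := by
    intro c j
    have h2 : ∑ j' ∈ Finset.univ.erase j, p (F.var c j')
        = (∑ j', p (F.var c j')) - p (F.var c j) :=
      Finset.sum_erase_eq_sub (Finset.mem_univ j)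
    rw [clausePure, h2, hpsum]; ring
  have hqp : ∀ c j, q c j * p (F.var c j) = q c j := by
    intro c j
    rw [hq, hp]
    by_cases h : α (F.var c j) <;> simp [h]
  have hce : ∀ c, clauseExp F p q c = 1 := by
    intro c
    have : ∀ j ∈ Finset.univ, q c j * clausePure F p c j
        = 2 * (q c j * p (F.var c j)) - q c j := by
      intro j _; rw [hcp]; ring
    rw [clauseExp, Finset.sum_congr rfl this, Finset.sum_sub_distrib, ← Finset.mul_sum]
    have : ∑ j, q c j * p (F.var c j) = ∑ j, q c j :=
      Finset.sum_congr rfl fun j _ => hqp c j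
    rw [this, hqsum]; ring
  -- variable side
  have hS0 : ∀ v, 0 ≤ ∑ c, ∑ j, (if F.var c j = v then q c j else 0) := by
    intro v
    refine Finset.sum_nonneg fun c _ => Finset.sum_nonneg fun j _ => ?_
    split
    · exact hq0 c j
    · exact le_refl 0
  have hSfalse : ∀ v, α v = false →
      ∑ c, ∑ j, (if F.var c j = v then q c j else 0) = 0 := by
    intro v hv
    refine Finset.sum_eq_zero fun c _ => Finset.sum_eq_zero fun j _ => ?_
    split
    · next h => rw [hq, h, hv]; simp
    · rfl
  have hvpf : ∀ v, varPure F q v false ≤ 0 := by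
    intro v
    rw [varPure]
    simp only [Bool.false_eq_true, if_false, neg_nonpos]
    exact hS0 v
  have hve : ∀ v, varExp F p q v = 0 := by
    intro v
    rw [varExp, varPure]
    by_cases h : α v
    · rw [hp, if_pos h]; simp
    · rw [hp, if_neg h]
      simp only [Bool.not_eq_true] at h
      simp [varPure, hSfalse v h]
  refine ⟨⟨⟨hp01, hq0, hqsum⟩, ?_, ?_⟩, ?_⟩
  · -- clause NE
    intro c j
    rw [hce, hcp]
    have := (hp01 (F.var c j)).2
    linarith
  · -- variable NE
    intro v b
    rw [hve]
    cases b
    · exact hvpf v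
    · rw [varPure]; simp
  · -- welfare
    rw [welfare]
    have h1 : ∑ c, clauseExp F p q c = (Fintype.card C : ℝ) := by
      rw [Finset.sum_congr rfl fun c _ => hce c, Finset.sum_const, Finset.card_univ]
      simp
    have h2 : ∑ v, varExp F p q v = 0 :=
      Finset.sum_eq_zero fun v _ => hve v
    rw [h1, h2, add_zero]

end Stmt2
end

section
/- In the polymatrix game G built from a monotone cubic 1-in-3 SAT formula, every variable player receives total payoff at most 0 under any strategy profile, and every clause player receives total payoff at most 1; moreover, a clause player attains payoff 1 only if it and its three neighboring variable players all play pure strategies. -/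
namespace Stmt3

/-- A monotone cubic formula with exactly three distinct variables per clause. -/
structure CubicFormula (V C : Type) where
  var : C → Fin 3 → V
  inj : ∀ c, Function.Injective (var c)

variable {V C : Type} [Fintype V] [Fintype C] [DecidableEq V]

/-- α is a 1-in-3 satisfying assignment: exactly one variable per clause is true. -/
def OneInThree (F : CubicFormula V C) (α : V → Bool) : Prop :=
  ∀ c : C, (Finset.univ.filter (fun j : Fin 3 => α (F.var c j) = true)).card = 1

/-- Payoff of clause player `c` for pure strategy `j`, where `p v` is the probability
that variable player `v` plays True: `p_j - Σ_{j'≠j} p_{j'}`. -/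
def clausePure (F : CubicFormula V C) (p : V → ℝ) (c : C) (j : Fin 3) : ℝ :=
  p (F.var c j) - ∑ j' ∈ Finset.univ.erase j, p (F.var c j')

/-- Expected payoff of clause player `c`, where `q c` is its mixed strategy. -/
def clauseExp (F : CubicFormula V C) (p : V → ℝ) (q : C → Fin 3 → ℝ) (c : C) : ℝ :=
  ∑ j, q c j * clausePure F p c j

/-- Payoff of variable player `v` for pure strategy `b` (True/False): 0 for True, and
`-Σ` (probability an incident clause plays `v`'s column) for False. -/
def varPure (F : CubicFormula V C) (q : C → Fin 3 → ℝ) (v : V) (b : Bool) : ℝ :=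
  if b then 0 else -∑ c, ∑ j, (if F.var c j = v then q c j else 0)

/-- Expected payoff of variable player `v`, who plays True with probability `p v`. -/
def varExp (F : CubicFormula V C) (p : V → ℝ) (q : C → Fin 3 → ℝ) (v : V) : ℝ :=
  p v * varPure F q v true + (1 - p v) * varPure F q v false

/-- Social welfare: sum of all players' expected payoffs. -/
def welfare (F : CubicFormula V C) (p : V → ℝ) (q : C → Fin 3 → ℝ) : ℝ :=
  ∑ c, clauseExp F p q c + ∑ v, varExp F p q v

/-- A valid mixed strategy profile. -/
def IsProfile (p : V → ℝ) (q : C → Fin 3 → ℝ) : Prop :=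
  (∀ v, p v ∈ Set.Icc (0:ℝ) 1) ∧ (∀ c j, 0 ≤ q c j) ∧ (∀ c, ∑ j, q c j = 1)

/-- An exact Nash equilibrium: no player can improve by a unilateral (pure) deviation. -/
def IsNE (F : CubicFormula V C) (p : V → ℝ) (q : C → Fin 3 → ℝ) : Prop :=
  IsProfile p q ∧ (∀ c j, clauseExp F p q c ≥ clausePure F p c j) ∧
    (∀ v b, varExp F p q v ≥ varPure F q v b)

/-- Every variable player gets total payoff at most 0, every clause player at most 1,
and a clause player attains payoff 1 only if it and its three neighbouring variable
players all play pure strategies. -/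
theorem stmt_3 (F : CubicFormula V C) (p : V → ℝ) (q : C → Fin 3 → ℝ)
    (hprof : IsProfile p q) :
    (∀ v, varExp F p q v ≤ 0) ∧ (∀ c, clauseExp F p q c ≤ 1) ∧
    (∀ c, clauseExp F p q c = 1 →
      (∃ j, q c j = 1) ∧ ∀ j, p (F.var c j) = 0 ∨ p (F.var c j) = 1) := by
  obtain ⟨hp, hq0, hq1⟩ := hprof
  have hpure : ∀ c j, clausePure F p c j ≤ 1 := by
    intro c j
    unfold clausePure
    have h1 : p (F.var c j) ≤ 1 := (hp _).2
    have h2 : 0 ≤ ∑ j' ∈ Finset.univ.erase j, p (F.var c j') :=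
      Finset.sum_nonneg fun i _ => (hp _).1
    linarith
  have hexp : ∀ c, clauseExp F p q c ≤ 1 := by
    intro c
    calc clauseExp F p q c ≤ ∑ j, q c j * 1 :=
          Finset.sum_le_sum fun j _ =>
            mul_le_mul_of_nonneg_left (hpure c j) (hq0 c j)
      _ = 1 := by simp [hq1 c]
  refine ⟨?_, hexp, ?_⟩
  · intro v
    have hS : 0 ≤ ∑ c, ∑ j, (if F.var c j = v then q c j else 0) :=
      Finset.sum_nonneg fun c _ => Finset.sum_nonneg fun j _ => by
        split <;> first | exact hq0 c j | exact le_rfl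
    have h1 := (hp v).1
    have h2 := (hp v).2
    unfold varExp varPure
    simp only [if_true, Bool.false_eq_true, if_false]
    nlinarith [mul_nonneg (by linarith : (0:ℝ) ≤ 1 - p v) hS]
  · intro c hc
    have hkey : ∀ j, 0 < q c j → clausePure F p c j = 1 := by
      intro j hj
      have hz : ∑ j', q c j' * (1 - clausePure F p c j') = 0 := by
        have : ∑ j', q c j' * (1 - clausePure F p c j')
            = (∑ j', q c j') - clauseExp F p q c := by
          unfold clauseExp; rw [← Finset.sum_sub_distrib]; ring_nf
        rw [this, hq1 c, hc]; ring
      have hnn : ∀ j' ∈ Finset.univ, 0 ≤ q c j' * (1 - clausePure F p c j') :=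
        fun j' _ => mul_nonneg (hq0 c j') (by linarith [hpure c j'])
      have := (Finset.sum_eq_zero_iff_of_nonneg hnn).mp hz j (Finset.mem_univ j)
      have h1 : 1 - clausePure F p c j = 0 := by
        rcases mul_eq_zero.mp this with h | h
        · exact absurd h (by linarith)
        · exact h
      linarith
    obtain ⟨j0, hj0⟩ : ∃ j0, 0 < q c j0 := by
      by_contra h
      push_neg at h
      have hz : ∀ j, q c j = 0 := fun j => le_antisymm (h j) (hq0 c j)
      have h1 := hq1 c
      rw [Finset.sum_eq_zero (fun j _ => hz j)] at h1
      norm_num at h1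
    have hcp := hkey j0 hj0
    unfold clausePure at hcp
    have hsum0 : ∑ j' ∈ Finset.univ.erase j0, p (F.var c j') = 0 := by
      have := (hp (F.var c j0)).2
      have h2 : 0 ≤ ∑ j' ∈ Finset.univ.erase j0, p (F.var c j') :=
        Finset.sum_nonneg fun i _ => (hp _).1
      linarith
    have hp0 : p (F.var c j0) = 1 := by
      rw [hsum0] at hcp; linarith
    have hpz : ∀ j ∈ Finset.univ.erase j0, p (F.var c j) = 0 :=
      (Finset.sum_eq_zero_iff_of_nonneg fun i _ => (hp _).1).mp hsum0
    have hqz : ∀ j, j ≠ j0 → q c j = 0 := by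
      intro j hj
      by_contra hne
      have hjpos : 0 < q c j := lt_of_le_of_ne (hq0 c j) (Ne.symm hne)
      have hcpj := hkey j hjpos
      unfold clausePure at hcpj
      have h2 : 0 ≤ ∑ j' ∈ Finset.univ.erase j, p (F.var c j') :=
        Finset.sum_nonneg fun i _ => (hp _).1
      have hpj : p (F.var c j) = 0 := hpz j (Finset.mem_erase.mpr ⟨hj, Finset.mem_univ j⟩)
      have := (hp (F.var c j)).2
      linarith
    refine ⟨⟨j0, ?_⟩, ?_⟩
    · have := hq1 c
      rwa [← Finset.add_sum_erase _ _ (Finset.mem_univ j0),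
        Finset.sum_eq_zero (fun j hj => hqz j (Finset.mem_erase.mp hj).1), add_zero] at this
    · intro j
      by_cases h : j = j0
      · right; rw [h]; exact hp0
      · left; exact hpz j (Finset.mem_erase.mpr ⟨h, Finset.mem_univ j⟩)

end Stmt3
end

section
/- If the polymatrix game G built from a monotone cubic 1-in-3 SAT formula φ admits a strategy profile with social welfare equal to the number of clauses m, then φ has a 1-in-3 satisfying assignment. -/
namespace Stmt4

/-- A monotone cubic formula with exactly three distinct variables per clause. -/
structure CubicFormula (V C : Type) where
  var : C → Fin 3 → V
  inj : ∀ c, Function.Injective (var c)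

variable {V C : Type} [Fintype V] [Fintype C] [DecidableEq V]

/-- α is a 1-in-3 satisfying assignment: exactly one variable per clause is true. -/
def OneInThree (F : CubicFormula V C) (α : V → Bool) : Prop :=
  ∀ c : C, (Finset.univ.filter (fun j : Fin 3 => α (F.var c j) = true)).card = 1

/-- Payoff of clause player `c` for pure strategy `j`, where `p v` is the probability
that variable player `v` plays True: `p_j - Σ_{j'≠j} p_{j'}`. -/
def clausePure (F : CubicFormula V C) (p : V → ℝ) (c : C) (j : Fin 3) : ℝ :=
  p (F.var c j) - ∑ j' ∈ Finset.univ.erase j, p (F.var c j')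

/-- Expected payoff of clause player `c`, where `q c` is its mixed strategy. -/
def clauseExp (F : CubicFormula V C) (p : V → ℝ) (q : C → Fin 3 → ℝ) (c : C) : ℝ :=
  ∑ j, q c j * clausePure F p c j

/-- Payoff of variable player `v` for pure strategy `b` (True/False): 0 for True, and
`-Σ` (probability an incident clause plays `v`'s column) for False. -/
def varPure (F : CubicFormula V C) (q : C → Fin 3 → ℝ) (v : V) (b : Bool) : ℝ :=
  if b then 0 else -∑ c, ∑ j, (if F.var c j = v then q c j else 0)

/-- Expected payoff of variable player `v`, who plays True with probability `p v`. -/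
def varExp (F : CubicFormula V C) (p : V → ℝ) (q : C → Fin 3 → ℝ) (v : V) : ℝ :=
  p v * varPure F q v true + (1 - p v) * varPure F q v false

/-- Social welfare: sum of all players' expected payoffs. -/
def welfare (F : CubicFormula V C) (p : V → ℝ) (q : C → Fin 3 → ℝ) : ℝ :=
  ∑ c, clauseExp F p q c + ∑ v, varExp F p q v

/-- A valid mixed strategy profile. -/
def IsProfile (p : V → ℝ) (q : C → Fin 3 → ℝ) : Prop :=
  (∀ v, p v ∈ Set.Icc (0:ℝ) 1) ∧ (∀ c j, 0 ≤ q c j) ∧ (∀ c, ∑ j, q c j = 1)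

/-- An exact Nash equilibrium: no player can improve by a unilateral (pure) deviation. -/
def IsNE (F : CubicFormula V C) (p : V → ℝ) (q : C → Fin 3 → ℝ) : Prop :=
  IsProfile p q ∧ (∀ c j, clauseExp F p q c ≥ clausePure F p c j) ∧
    (∀ v b, varExp F p q v ≥ varPure F q v b)

lemma welfare_eq (F : CubicFormula V C) (p : V → ℝ) (q : C → Fin 3 → ℝ)
    (hq1 : ∀ c, ∑ j, q c j = 1) :
    welfare F p q = ∑ c, ∑ j, q c j *
      (3 * p (F.var c j) - ∑ j', p (F.var c j')) - Fintype.card C := by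
  have hvar : ∑ v, varExp F p q v = ∑ c, ∑ j, (p (F.var c j) - 1) * q c j := by
    have : ∑ v, varExp F p q v
        = ∑ v, (p v - 1) * (∑ c, ∑ j, (if F.var c j = v then q c j else 0)) := by
      apply Finset.sum_congr rfl
      intro v _
      simp only [varExp, varPure, if_true]
      norm_num
      ring
    rw [this]
    simp only [Finset.mul_sum]
    rw [Finset.sum_comm]
    refine Finset.sum_congr rfl fun c _ => ?_
    rw [Finset.sum_comm]
    refine Finset.sum_congr rfl fun j _ => ?_
    simp [mul_ite]
  have hclause : ∀ c, clauseExp F p q c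
      = ∑ j, q c j * (2 * p (F.var c j) - ∑ j', p (F.var c j')) := by
    intro c
    refine Finset.sum_congr rfl fun j _ => ?_
    congr 1
    rw [clausePure, Finset.sum_erase_eq_sub (Finset.mem_univ j)]
    ring
  rw [welfare, hvar]
  rw [Finset.sum_congr rfl fun c _ => hclause c]
  rw [← Finset.sum_add_distrib]
  have : ∀ c : C, (∑ j, q c j * (2 * p (F.var c j) - ∑ j', p (F.var c j')))
      + ∑ j, (p (F.var c j) - 1) * q c j
      = (∑ j, q c j * (3 * p (F.var c j) - ∑ j', p (F.var c j'))) - 1 := by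
    intro c
    rw [← Finset.sum_add_distrib]
    have hstep : ∀ j : Fin 3, q c j * (2 * p (F.var c j) - ∑ j', p (F.var c j'))
        + (p (F.var c j) - 1) * q c j
        = q c j * (3 * p (F.var c j) - ∑ j', p (F.var c j')) - q c j := by
      intro j; ring
    rw [Finset.sum_congr rfl fun j _ => hstep j, Finset.sum_sub_distrib, hq1 c]
  rw [Finset.sum_congr rfl fun c _ => this c, Finset.sum_sub_distrib]
  simp

/-- If the game built from φ admits a strategy profile with social welfare equal to the
number of clauses, then φ has a 1-in-3 satisfying assignment. -/
theorem stmt_4 (F : CubicFormula V C) (p : V → ℝ) (q : C → Fin 3 → ℝ)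
    (hprof : IsProfile p q) (hw : welfare F p q = Fintype.card C) :
    ∃ α : V → Bool, OneInThree F α := by
  obtain ⟨hp, hq0, hq1⟩ := hprof
  set val : C → Fin 3 → ℝ := fun c j => 3 * p (F.var c j) - ∑ j', p (F.var c j') with hval
  -- core equality: ∑_c ∑_j q c j * val c j = 2 * card C
  have hsum : ∑ c, ∑ j, q c j * val c j = ∑ c : C, (2:ℝ) := by
    have := welfare_eq F p q hq1
    rw [hw] at this
    have h2 : ∑ c, ∑ j, q c j * val c j = 2 * Fintype.card C := by linarith
    rw [h2]
    simp [mul_comm]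
  -- per-term bound: val c j ≤ 2
  have hvb : ∀ c j, val c j ≤ 2 := by
    intro c j
    have herase : (∑ j', p (F.var c j')) = p (F.var c j)
        + ∑ j' ∈ Finset.univ.erase j, p (F.var c j') :=
      (Finset.add_sum_erase _ _ (Finset.mem_univ j)).symm
    have h1 : p (F.var c j) ≤ 1 := (hp _).2
    have h0 : (0:ℝ) ≤ ∑ j' ∈ Finset.univ.erase j, p (F.var c j') :=
      Finset.sum_nonneg fun j' _ => (hp _).1
    rw [hval]; dsimp only; rw [herase]; linarith
  -- per-clause bound
  have hcb : ∀ c, ∑ j, q c j * val c j ≤ 2 := by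
    intro c
    calc ∑ j, q c j * val c j ≤ ∑ j, q c j * 2 :=
          Finset.sum_le_sum fun j _ => mul_le_mul_of_nonneg_left (hvb c j) (hq0 c j)
      _ = 2 := by rw [← Finset.sum_mul, hq1 c]; ring
  have hceq : ∀ c, ∑ j, q c j * val c j = 2 := by
    intro c
    have := (Finset.sum_eq_sum_iff_of_le (fun c _ => hcb c)).mp hsum c (Finset.mem_univ c)
    exact this
  -- for each c, obtain j₀ with p = 1 and others 0
  have key : ∀ c, ∃ j₀ : Fin 3, p (F.var c j₀) = 1 ∧
      ∀ j, j ≠ j₀ → p (F.var c j) = 0 := by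
    intro c
    have hterm : ∀ j, q c j * val c j = q c j * 2 := by
      have hs : ∑ j, q c j * val c j = ∑ j, q c j * 2 := by
        rw [hceq c, ← Finset.sum_mul, hq1 c]; ring
      intro j
      exact (Finset.sum_eq_sum_iff_of_le
        (fun j _ => mul_le_mul_of_nonneg_left (hvb c j) (hq0 c j))).mp hs j (Finset.mem_univ j)
    obtain ⟨j₀, hj₀⟩ : ∃ j₀, q c j₀ ≠ 0 := by
      by_contra h
      push_neg at h
      have := hq1 c
      simp [h] at this
    have hv2 : val c j₀ = 2 := mul_left_cancel₀ hj₀ (hterm j₀)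
    have herase : (∑ j', p (F.var c j')) = p (F.var c j₀)
        + ∑ j' ∈ Finset.univ.erase j₀, p (F.var c j') :=
      (Finset.add_sum_erase _ _ (Finset.mem_univ j₀)).symm
    have h1 : p (F.var c j₀) ≤ 1 := (hp _).2
    have h0 : (0:ℝ) ≤ ∑ j' ∈ Finset.univ.erase j₀, p (F.var c j') :=
      Finset.sum_nonneg fun j' _ => (hp _).1
    rw [hval] at hv2; dsimp only at hv2; rw [herase] at hv2
    have hp1 : p (F.var c j₀) = 1 := by linarith
    have hr0 : ∑ j' ∈ Finset.univ.erase j₀, p (F.var c j') = 0 := by linarith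
    refine ⟨j₀, hp1, fun j hj => ?_⟩
    have := (Finset.sum_eq_zero_iff_of_nonneg fun j' _ => (hp _).1).mp hr0 j
      (Finset.mem_erase.mpr ⟨hj, Finset.mem_univ j⟩)
    exact this
  refine ⟨fun v => decide (p v = 1), fun c => ?_⟩
  obtain ⟨j₀, h1, h0⟩ := key c
  rw [Finset.card_eq_one]
  refine ⟨j₀, ?_⟩
  ext j
  simp only [Finset.mem_filter, Finset.mem_univ, true_and, Finset.mem_singleton,
    decide_eq_true_eq]
  constructor
  · intro hj
    by_contra hne
    rw [h0 j hne] at hj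
    norm_num at hj
  · intro hj; rw [hj]; exact h1

end Stmt4
end

section
/- In the modified game G' built from a monotone cubic 1-in-3 SAT formula φ with parameter ε ∈ (0,1), if φ has a 1-in-3 satisfying assignment, then the pure profile in which each variable player plays its truth value and each clause player plays the strategy of the unique true variable in its clause is an ε-well-supported Nash equilibrium in which no player plays Out. -/
namespace Stmt6

/-- A monotone cubic formula with exactly three distinct variables per clause. -/
structure CubicFormula (V C : Type) where
  var : C → Fin 3 → V
  inj : ∀ c, Function.Injective (var c)

variable {V C : Type} [Fintype V] [Fintype C] [DecidableEq V] [DecidableEq C]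

/-- α is a 1-in-3 satisfying assignment: exactly one variable per clause is true. -/
def OneInThree (F : CubicFormula V C) (α : V → Bool) : Prop :=
  ∀ c : C, (Finset.univ.filter (fun j : Fin 3 => α (F.var c j) = true)).card = 1

/-- Each variable occurs in exactly three clause positions (the formula is cubic). -/
def Cubic (F : CubicFormula V C) : Prop :=
  ∀ v : V, (Finset.univ.filter (fun cj : C × Fin 3 => F.var cj.1 cj.2 = v)).card = 3

/-- The bipartite interaction graph between variable players and clause players. -/
def interactionGraph (F : CubicFormula V C) : SimpleGraph (V ⊕ C) :=
  SimpleGraph.fromRel (fun a b =>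
    match a, b with
    | Sum.inl v, Sum.inr c => ∃ j, F.var c j = v
    | _, _ => False)

/-- Payoff to clause player `c_j` on the edge with its `j`-th variable, when the clause
plays `s` (`none` = Out) and the variable plays `b` (`none` = Out). -/
noncomputable def edgeClausePay (cc κ : ℝ) (j : Fin 3) (s : Option (Fin 3)) (b : Option Bool) : ℝ :=
  match s, b with
  | none, _ => 1 / 3
  | some t, some true => if t = j then κ else 0
  | some _, some false => cc * κ
  | some _, none => 0

/-- Payoff to the variable player on the edge where it is the `j`-th variable of a
clause playing `s`, when the variable plays `b` (`none` = Out). -/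
noncomputable def edgeVarPay (ε : ℝ) (j : Fin 3) (s : Option (Fin 3)) (b : Option Bool) : ℝ :=
  match b, s with
  | none, _ => 1 / 3
  | some true, s => if s = some j then 1 / 3 - ε / 3 else 0
  | some false, some t => if t = j then 0 else 1 / 3 - ε / 3
  | some false, none => 0

/-- Payoff of clause player `c` for pure strategy `s`, against the variable players'
mixed strategies `p`. -/
noncomputable def clausePure (F : CubicFormula V C) (cc κ : ℝ) (p : V → Option Bool → ℝ) (c : C)
    (s : Option (Fin 3)) : ℝ :=
  ∑ j : Fin 3, ∑ b : Option Bool, p (F.var c j) b * edgeClausePay cc κ j s b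

/-- Payoff of variable player `v` for pure strategy `b`, against the clause players'
mixed strategies `q`. -/
noncomputable def varPure (F : CubicFormula V C) (ε : ℝ) (q : C → Option (Fin 3) → ℝ) (v : V)
    (b : Option Bool) : ℝ :=
  ∑ c : C, ∑ j : Fin 3, ∑ s : Option (Fin 3),
    (if F.var c j = v then q c s * edgeVarPay ε j s b else 0)

/-- A valid mixed strategy profile of the game G'. -/
def IsProfile (p : V → Option Bool → ℝ) (q : C → Option (Fin 3) → ℝ) : Prop :=
  (∀ v b, 0 ≤ p v b) ∧ (∀ v, ∑ b, p v b = 1) ∧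
  (∀ c s, 0 ≤ q c s) ∧ (∀ c, ∑ s, q c s = 1)

/-- An ε-well-supported Nash equilibrium of G': every pure strategy played with
positive probability is an ε-best response. -/
def IsWSNE (F : CubicFormula V C) (ε cc κ : ℝ) (p : V → Option Bool → ℝ)
    (q : C → Option (Fin 3) → ℝ) : Prop :=
  IsProfile p q ∧
  (∀ v b, 0 < p v b → ∀ b', varPure F ε q v b ≥ varPure F ε q v b' - ε) ∧
  (∀ c s, 0 < q c s → ∀ s', clausePure F cc κ p c s ≥ clausePure F cc κ p c s' - ε)

/-- If φ has a 1-in-3 satisfying assignment, then the pure profile in which each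
variable player plays its truth value and each clause player plays the strategy of the
unique true variable of its clause is an ε-WSNE of G' in which no player plays Out. -/
theorem stmt_6 (F : CubicFormula V C) (hcub : Cubic F) (ε cc κ : ℝ)
    (hε0 : 0 < ε) (hε1 : ε < 1) (hcc0 : max (1 - 3 * ε / 2) 0 < cc) (hcc1 : cc < 1)
    (hκ : κ = (1 - ε) / (1 + 2 * cc))
    (α : V → Bool) (hα : OneInThree F α)
    (σ : C → Fin 3) (hσ : ∀ c, α (F.var c (σ c)) = true)
    (p : V → Option Bool → ℝ) (q : C → Option (Fin 3) → ℝ)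
    (hp : ∀ v b, p v b = if b = some (α v) then 1 else 0)
    (hq : ∀ c s, q c s = if s = some (σ c) then 1 else 0) :
    IsWSNE F ε cc κ p q ∧ (∀ v, p v none = 0) ∧ (∀ c, q c none = 0) := by
  have hcc0' : 0 < cc := lt_of_le_of_lt (le_max_right _ _) hcc0
  have hden : (0:ℝ) < 1 + 2 * cc := by linarith
  have hκ0 : 0 ≤ κ := by
    rw [hκ]; apply div_nonneg <;> linarith
  have hκsum : κ * (1 + 2 * cc) = 1 - ε := by
    rw [hκ]; field_simp
  -- the unique true index of clause c is σ c
  have huniq : ∀ c j, α (F.var c j) = true ↔ j = σ c := by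
    intro c j
    have h1 := hα c
    rw [Finset.card_eq_one] at h1
    obtain ⟨a, ha⟩ := h1
    have hmem : σ c ∈ Finset.univ.filter (fun j : Fin 3 => α (F.var c j) = true) := by
      simp [hσ c]
    rw [ha, Finset.mem_singleton] at hmem
    constructor
    · intro h
      have : j ∈ Finset.univ.filter (fun j : Fin 3 => α (F.var c j) = true) := by simp [h]
      rw [ha, Finset.mem_singleton] at this
      rw [this, hmem]
    · intro h; rw [h]; exact hσ c
  have hval : ∀ c j, α (F.var c j) = decide (j = σ c) := by
    intro c j
    by_cases h : j = σ c
    · simp [h, (huniq c (σ c)).mpr rfl]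
    · have : α (F.var c j) ≠ true := fun hh => h ((huniq c j).mp hh)
      simp [h, Bool.not_eq_true] at this ⊢
      exact this
  -- closed form for clause payoffs
  have hinner : ∀ {β : Type} [Fintype β] [DecidableEq β] (a0 : β) (g : β → ℝ),
      ∑ b, (if b = a0 then (1:ℝ) else 0) * g b = g a0 := by
    intro β _ _ a0 g; simp [ite_mul]
  have hCP : ∀ c s, clausePure F cc κ p c s =
      ∑ j : Fin 3, edgeClausePay cc κ j s (some (α (F.var c j))) := by
    intro c s
    unfold clausePure
    refine Finset.sum_congr rfl (fun j _ => ?_)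
    simp only [hp]
    exact hinner _ _
  have hCnone : ∀ c, clausePure F cc κ p c none = 1 := by
    intro c
    rw [hCP]
    simp [edgeClausePay, Fin.sum_univ_three]
    try norm_num
  have hCsome : ∀ c t, clausePure F cc κ p c (some t)
      = (if t = σ c then κ else 0) + 2 * (cc * κ) := by
    intro c t
    rw [hCP]
    have := hval c
    rw [Fin.sum_univ_three, this 0, this 1, this 2]
    generalize σ c = k
    fin_cases k <;> fin_cases t <;> simp [edgeClausePay] <;> ring
  -- closed form for variable payoffs
  have hVP : ∀ v b, varPure F ε q v b =
      ∑ cj ∈ Finset.univ.filter (fun cj : C × Fin 3 => F.var cj.1 cj.2 = v),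
        edgeVarPay ε cj.2 (some (σ cj.1)) b := by
    intro v b
    unfold varPure
    rw [Finset.sum_filter, ← Finset.sum_product']
    refine Finset.sum_congr rfl (fun cj _ => ?_)
    by_cases h : F.var cj.1 cj.2 = v
    · simp only [hq, h, if_true]
      exact hinner _ _
    · simp [h]
  have hkey : ∀ (w : V) (c : C) (j : Fin 3), F.var c j = w → (σ c = j ↔ α w = true) := by
    intro w c j h
    constructor
    · intro hs; rw [← h, ← hs]; exact hσ c
    · intro ht
      exact ((huniq c j).mp (by rw [h]; exact ht)).symm
  have hVnone : ∀ v, varPure F ε q v none = 1 := by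
    intro v
    rw [hVP]
    have h1 : ∀ cj ∈ Finset.univ.filter (fun cj : C × Fin 3 => F.var cj.1 cj.2 = v),
        edgeVarPay ε cj.2 (some (σ cj.1)) none = 1/3 := fun cj _ => rfl
    rw [Finset.sum_congr rfl h1, Finset.sum_const, hcub v]
    norm_num
  have hVb : ∀ (v : V) (b0 : Bool), varPure F ε q v (some b0) =
      if b0 = α v then 1 - ε else 0 := by
    intro v b0
    rw [hVP]
    have hterm : ∀ cj ∈ Finset.univ.filter (fun cj : C × Fin 3 => F.var cj.1 cj.2 = v),
        edgeVarPay ε cj.2 (some (σ cj.1)) (some b0)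
          = if b0 = α v then 1/3 - ε/3 else 0 := by
      intro cj hcj
      rw [Finset.mem_filter] at hcj
      have hk := hkey v cj.1 cj.2 hcj.2
      cases hα' : α v with
      | true =>
        have hs : σ cj.1 = cj.2 := hk.mpr hα'
        cases b0 <;> simp [edgeVarPay, hs, hα']
      | false =>
        have hs : σ cj.1 ≠ cj.2 := fun h => by simp [hk.mp h] at hα'
        cases b0 <;> simp [edgeVarPay, hα', hs]
    rw [Finset.sum_congr rfl hterm, Finset.sum_const, hcub v]
    by_cases h : b0 = α v <;> simp [h] <;> ring
  -- payoff bounds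
  have hCle : ∀ c s, clausePure F cc κ p c s ≤ 1 := by
    intro c s
    cases s with
    | none => rw [hCnone]
    | some t =>
      rw [hCsome]
      have : (if t = σ c then κ else 0) ≤ κ := by split <;> simp [hκ0]
      nlinarith [hκsum]
  have hVle : ∀ v b, varPure F ε q v b ≤ 1 := by
    intro v b
    cases b with
    | none => rw [hVnone]
    | some b0 => rw [hVb]; split <;> linarith
  refine ⟨⟨⟨fun v b => by rw [hp]; split <;> norm_num,
      fun v => by simp [hp],
      fun c s => by rw [hq]; split <;> norm_num,
      fun c => by simp [hq]⟩, ?_, ?_⟩, ?_, ?_⟩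
  · intro v b hb b'
    have hbv : b = some (α v) := by
      by_contra h
      rw [hp, if_neg h] at hb
      exact lt_irrefl _ hb
    rw [hbv, hVb, if_pos rfl]
    have := hVle v b'
    linarith
  · intro c s hs s'
    have hsc : s = some (σ c) := by
      by_contra h
      rw [hq, if_neg h] at hs
      exact lt_irrefl _ hs
    rw [hsc, hCsome, if_pos rfl]
    have := hCle c s'
    nlinarith [hκsum]
  · intro v; rw [hp]; simp
  · intro c; rw [hq]; simp

end Stmt6
end

section
/- Duplicating a pure strategy of a player in a polymatrix game (adding a new pure strategy with payoff rows and columns identical to an existing one) preserves ε-well-supported Nash equilibria: any ε-WSNE of the original game remains an ε-WSNE of the duplicated game, and moreover the profile obtained by splitting the probability of a duplicated strategy evenly between the original and its copy is also an ε-WSNE. -/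
namespace Stmt9

variable {I : Type} [Fintype I] [DecidableEq I]

/-- Payoff of player `i` for pure strategy `a` against the mixed profile `σ`, in a
polymatrix game with edge payoff matrices `pay`. -/
def purePay {Act : I → Type} [∀ i, Fintype (Act i)]
    (pay : ∀ i j, Act i → Act j → ℝ) (σ : ∀ j, Act j → ℝ) (i : I) (a : Act i) : ℝ :=
  ∑ j ∈ Finset.univ.erase i, ∑ b : Act j, σ j b * pay i j a b

/-- A valid mixed strategy profile. -/
def IsProfile {Act : I → Type} [∀ i, Fintype (Act i)] (σ : ∀ j, Act j → ℝ) : Prop :=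
  ∀ i, (∀ a, 0 ≤ σ i a) ∧ ∑ a, σ i a = 1

/-- An ε-well-supported Nash equilibrium: every pure strategy in the support of any
player is an ε-best response. -/
def IsWSNE {Act : I → Type} [∀ i, Fintype (Act i)]
    (pay : ∀ i j, Act i → Act j → ℝ) (ε : ℝ) (σ : ∀ j, Act j → ℝ) : Prop :=
  IsProfile σ ∧
  ∀ i a, 0 < σ i a → ∀ a', purePay pay σ i a ≥ purePay pay σ i a' - ε

/-- The action set of the duplicated game: player `i0` gets one extra pure strategy
(the copy of `a0`); all other players are unchanged. -/
abbrev Act2 (Act : I → Type) (i0 : I) (i : I) : Type :=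
  Act i ⊕ Fin (if i = i0 then 1 else 0)

/-- The projection from duplicated actions to original actions, sending the copy back
to the original strategy `a0`. -/
def proj {Act : I → Type} (i0 : I) (a0 : Act i0) (i : I) : Act2 Act i0 i → Act i
  | Sum.inl a => a
  | Sum.inr x =>
    if h : i = i0 then cast (congrArg Act h.symm) a0
    else Fin.elim0 (Fin.cast (by simp [h]) x)

/-- The duplicated game: payoffs are obtained by projecting the duplicate back to the
original strategy, so the copy has payoff rows and columns identical to `a0`. -/
def pay2 {Act : I → Type} (pay : ∀ i j, Act i → Act j → ℝ) (i0 : I) (a0 : Act i0)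
    (i j : I) (a : Act2 Act i0 i) (b : Act2 Act i0 j) : ℝ :=
  pay i j (proj i0 a0 i a) (proj i0 a0 j b)

/-- Pushforward of a mixed profile on the duplicated game to the original game. -/
def push {Act : I → Type} [∀ i, Fintype (Act i)] [∀ i, DecidableEq (Act i)]
    (i0 : I) (a0 : Act i0) (σ' : ∀ j, Act2 Act i0 j → ℝ) (j : I) (b : Act j) : ℝ :=
  ∑ x : Act2 Act i0 j, if proj i0 a0 j x = b then σ' j x else 0

lemma sum_push {Act : I → Type} [∀ i, Fintype (Act i)] [∀ i, DecidableEq (Act i)]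
    (i0 : I) (a0 : Act i0) (σ' : ∀ j, Act2 Act i0 j → ℝ) (j : I) :
    ∑ b, push i0 a0 σ' j b = ∑ x, σ' j x := by
  unfold push
  rw [Finset.sum_comm]
  simp [Finset.sum_ite_eq]

lemma purePay_pay2 {Act : I → Type} [∀ i, Fintype (Act i)] [∀ i, DecidableEq (Act i)]
    (pay : ∀ i j, Act i → Act j → ℝ) (i0 : I) (a0 : Act i0)
    (σ' : ∀ j, Act2 Act i0 j → ℝ) (i : I) (a : Act2 Act i0 i) :
    purePay (pay2 pay i0 a0) σ' i a
      = purePay pay (push i0 a0 σ') i (proj i0 a0 i a) := by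
  unfold purePay pay2 push
  refine Finset.sum_congr rfl fun j _ => ?_
  simp only [Finset.sum_mul, ite_mul, zero_mul]
  rw [Finset.sum_comm]
  simp [Finset.sum_ite_eq]

lemma wsne_of_push {Act : I → Type} [∀ i, Fintype (Act i)] [∀ i, DecidableEq (Act i)]
    (pay : ∀ i j, Act i → Act j → ℝ) (i0 : I) (a0 : Act i0)
    (ε : ℝ) (σ : ∀ j, Act j → ℝ) (hσ : IsWSNE pay ε σ)
    (σ' : ∀ j, Act2 Act i0 j → ℝ)
    (hpush : push i0 a0 σ' = σ)
    (hnn : ∀ i x, 0 ≤ σ' i x)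
    (hsupp : ∀ i x, 0 < σ' i x → 0 < σ i (proj i0 a0 i x)) :
    IsWSNE (pay2 pay i0 a0) ε σ' := by
  constructor
  · intro i
    refine ⟨hnn i, ?_⟩
    rw [← sum_push i0 a0 σ' i]
    have := congrFun (congrFun hpush i)
    simp only [this]
    exact (hσ.1 i).2
  · intro i a ha a'
    rw [purePay_pay2, purePay_pay2, hpush]
    exact hσ.2 i (proj i0 a0 i a) (hsupp i a ha) _

/-- Duplicating a pure strategy preserves ε-WSNE: the original equilibrium (placing no
probability on the copy) remains an ε-WSNE, and so does the profile that splits the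
probability of the duplicated strategy evenly between the original and its copy. -/
theorem stmt_9 {Act : I → Type} [∀ i, Fintype (Act i)] [∀ i, DecidableEq (Act i)]
    (pay : ∀ i j, Act i → Act j → ℝ) (i0 : I) (a0 : Act i0)
    (ε : ℝ) (hε : 0 ≤ ε) (σ : ∀ j, Act j → ℝ) (hσ : IsWSNE pay ε σ) :
    IsWSNE (pay2 pay i0 a0) ε
      (fun i x => match x with
        | Sum.inl a => σ i a
        | Sum.inr _ => 0) ∧
    IsWSNE (pay2 pay i0 a0) ε
      (fun i x => match x with
        | Sum.inl a =>
          if h : i = i0 then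
            (if cast (congrArg Act h) a = a0 then σ i a / 2 else σ i a)
          else σ i a
        | Sum.inr _ => σ i0 a0 / 2) := by
  constructor
  · apply wsne_of_push pay i0 a0 ε σ hσ
    · funext j b
      unfold push
      rw [Fintype.sum_sum_type]
      show (∑ a : Act j, if proj i0 a0 j (Sum.inl a) = b then σ j a else 0) + (∑ x, if proj i0 a0 j (Sum.inr x) = b then (0:ℝ) else 0) = σ j b
      rw [Finset.sum_eq_zero (fun x _ => ite_self (0:ℝ)), add_zero]
      exact (Finset.sum_eq_single b (fun x _ hx => if_neg hx) (fun h => absurd (Finset.mem_univ b) h)).trans (if_pos rfl)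
    · intro i x
      cases x with
      | inl a => exact (hσ.1 i).1 a
      | inr x => exact le_refl 0
    · intro i x hx
      cases x with
      | inl a => exact hx
      | inr x => exact absurd hx (lt_irrefl 0)
  · apply wsne_of_push pay i0 a0 ε σ hσ
    · funext j b
      unfold push
      rw [Fintype.sum_sum_type]
      by_cases h : j = i0
      · subst h
        dsimp only
        have hB : (∑ x : Fin (if j = j then 1 else 0),
            if proj j a0 j (Sum.inr x) = b then σ j a0 / 2 else 0)
            = (if a0 = b then σ j a0 / 2 else 0) := by
          rw [Finset.sum_congr rfl (fun x _ => show
              (if proj j a0 j (Sum.inr x) = b then σ j a0 / 2 else 0)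
              = (if a0 = b then σ j a0 / 2 else 0) from by
            have hp : proj j a0 j (Sum.inr x) = a0 := by simp [proj]
            rw [hp]), Finset.sum_const]
          simp
        rw [hB]
        have hA : (∑ a : Act j,
            if proj j a0 j (Sum.inl a) = b then
              if h : j = j then if cast (congrArg Act h) a = a0 then σ j a / 2 else σ j a
              else σ j a
            else 0)
            = (if b = a0 then σ j b / 2 else σ j b) := by
          simp only [proj, dite_eq_ite, if_pos rfl, cast_eq, eq_self_iff_true, dite_true]
          rw [Finset.sum_ite_eq']
          simp
        rw [hA]
        by_cases hb : b = a0
        · subst hb; simp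
        · simp [hb, Ne.symm hb]
      · haveI : IsEmpty (Fin (if j = i0 then 1 else 0)) := by
          rw [if_neg h]; infer_instance
        rw [Finset.univ_eq_empty (α := Fin (if j = i0 then 1 else 0)), Finset.sum_empty]
        simp [Finset.sum_ite_eq, proj, h]
    · intro i x
      cases x with
      | inl a =>
        have hnn := (hσ.1 i).1 a
        show (0:ℝ) ≤ _
        dsimp only
        split
        · split
          · linarith
          · exact hnn
        · exact hnn
      | inr x =>
        have := (hσ.1 i0).1 a0
        show (0:ℝ) ≤ σ i0 a0 / 2
        linarith
    · intro i x hx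
      cases x with
      | inl a =>
        show 0 < σ i a
        dsimp only at hx
        split at hx
        · split at hx
          · linarith
          · exact hx
        · exact hx
      | inr x =>
        by_cases h : i = i0
        · subst h
          have hp : proj i a0 i (Sum.inr x) = a0 := by simp [proj]
          rw [hp]
          have hx' : 0 < σ i a0 / 2 := hx
          linarith
        · exact Fin.elim0 (Fin.cast (by simp [h]) x)

end Stmt9
end
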